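/- arXiv:2106.02784 — 2 statements merged into one kernel-verified Lean document; each statement's English description precedes it below -/
import Mathlib

section
/- Let μₑ be the multiplicative exterior measure on (0,∞) and let |·|ₑ denote Lebesgue outer measure. For U ⊆ (0,∞): μₑ(U) = 1 if and only if the Lebesgue outer measure of U is 0. -/
open scoped ENNReal
open Set

noncomputable section

/-- Infinite product of a sequence in `[1,∞]` (or `[0,∞]`), as the supremum of
partial products. -/
def iProd (a : ℕ → ℝ≥0∞) : ℝ≥0∞ := ⨆ N : ℕ, ∏ j ∈ Finset.range N, a j

/-- Unordered double infinite product: supremum of products over finite subsets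
of `ℕ × ℕ`. -/
def unordProd (a : ℕ × ℕ → ℝ≥0∞) : ℝ≥0∞ := ⨆ F : Finset (ℕ × ℕ), ∏ p ∈ F, a p

/-- `c` codes a countable cover of `E` by closed intervals `[a_j, b_j] ⊆ (0,∞)`. -/
def IsIntervalCover (E : Set ℝ) (c : ℕ → ℝ × ℝ) : Prop :=
  (∀ j, 0 < (c j).1 ∧ (c j).1 ≤ (c j).2) ∧ E ⊆ ⋃ j, Set.Icc (c j).1 (c j).2

/-- The multiplicative exterior measure on `(0,∞)`. -/
def muE (E : Set ℝ) : ℝ≥0∞ :=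
  ⨅ c : {c : ℕ → ℝ × ℝ // IsIntervalCover E c},
    iProd (fun j => ENNReal.ofReal ((c.1 j).2 / (c.1 j).1))

/-- `E ⊆ (0,∞)` is μ-measurable: for every `ε > 0` there is an open set
`G ⊆ (0,∞)` containing `E` with `μₑ(G \ E) < 1 + ε`. -/
def MuMeasurable (E : Set ℝ) : Prop :=
  E ⊆ Set.Ioi (0:ℝ) ∧ ∀ ε : ℝ, 0 < ε →
    ∃ G : Set ℝ, IsOpen G ∧ G ⊆ Set.Ioi (0:ℝ) ∧ E ⊆ G ∧
      muE (G \ E) < ENNReal.ofReal (1 + ε)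

/-- Extended exponential `[0,∞] → [1,∞]`, with `exp ∞ = ∞`. -/
def expE (t : ℝ≥0∞) : ℝ≥0∞ :=
  if t = ⊤ then ⊤ else ENNReal.ofReal (Real.exp t.toReal)

open MeasureTheory

set_option maxHeartbeats 1000000

private lemma one_le_iProd (a : ℕ → ℝ≥0∞) : 1 ≤ iProd a := by
  have h := le_iSup (fun N => ∏ j ∈ Finset.range N, a j) 0
  simpa [iProd] using h

private lemma one_le_muE (E : Set ℝ) : 1 ≤ muE E :=
  le_iInf fun _ => one_le_iProd _

/-- From a Lebesgue-null set, extract a countable closed-interval cover with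
small total length. -/
private lemma coverA (V : Set ℝ) (hV : volume V = 0) (δ : ℝ) (hδ : 0 < δ) :
    ∃ c : ℕ → ℝ × ℝ, (∀ j, (c j).1 ≤ (c j).2) ∧ (V ⊆ ⋃ j, Icc (c j).1 (c j).2) ∧
      ∑' j, ENNReal.ofReal ((c j).2 - (c j).1) < ENNReal.ofReal δ := by
  have base : volume V = StieltjesFunction.id.outer V := by
    rw [Real.volume_val, StieltjesFunction.measure]; rfl
  have hδ0 : (ENNReal.ofReal δ) ≠ 0 := (ENNReal.ofReal_pos.2 hδ).ne'
  have hhalf : (0:ℝ≥0∞) < ENNReal.ofReal δ / 2 := ENNReal.half_pos hδ0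
  have hlt : StieltjesFunction.id.outer V < ENNReal.ofReal δ / 2 := by
    rw [← base, hV]; exact hhalf
  rw [StieltjesFunction.outer, OuterMeasure.ofFunction_apply] at hlt
  obtain ⟨t, hlt⟩ := iInf_lt_iff.1 hlt
  obtain ⟨htV, hlt⟩ := iInf_lt_iff.1 hlt
  obtain ⟨e, he, hesum⟩ := ENNReal.exists_pos_sum_of_countable' hhalf.ne' ℕ
  have hfin : ∀ n, StieltjesFunction.id.length (t n) ≠ ⊤ := by
    intro n
    exact ne_top_of_lt (lt_of_le_of_lt (ENNReal.le_tsum n)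
      (hlt.trans (ENNReal.div_lt_top ENNReal.ofReal_ne_top (by norm_num))))
  have key : ∀ n, ∃ p : ℝ × ℝ, t n ⊆ Ioc p.1 p.2 ∧
      ENNReal.ofReal (p.2 - p.1) < StieltjesFunction.id.length (t n) + e n := by
    intro n
    have h1 : StieltjesFunction.id.length (t n)
        < StieltjesFunction.id.length (t n) + e n :=
      ENNReal.lt_add_right (hfin n) (he n).ne'
    nth_rewrite 1 [StieltjesFunction.length] at h1
    rw [if_neg (not_isEmpty_of_nonempty ℝ)] at h1
    obtain ⟨a, h1⟩ := iInf_lt_iff.1 h1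
    obtain ⟨b, h1⟩ := iInf_lt_iff.1 h1
    obtain ⟨hsub, h1⟩ := iInf_lt_iff.1 h1
    have hbot : botSet (R := ℝ) = ∅ :=
      Set.eq_empty_of_forall_notMem fun x hx => (notMem_botSet_of_lt (sub_one_lt x)) hx
    exact ⟨(a, b), by simpa [hbot] using hsub, by simpa using h1⟩
  choose p hp1 hp2 using key
  refine ⟨fun n => ((p n).1, max (p n).1 (p n).2), fun n => le_max_left _ _, ?_, ?_⟩
  · intro x hx
    obtain ⟨n, hn⟩ := mem_iUnion.1 (htV hx)
    exact mem_iUnion.2 ⟨n, (Icc_subset_Icc_right (le_max_right _ _))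
      (Ioc_subset_Icc_self (hp1 n hn))⟩
  · have hterm : ∀ n, ENNReal.ofReal (max (p n).1 (p n).2 - (p n).1)
        ≤ StieltjesFunction.id.length (t n) + e n := by
      intro n
      rcases le_total (p n).2 (p n).1 with hle | hle
      · rw [max_eq_left hle, sub_self, ENNReal.ofReal_zero]; exact zero_le
      · rw [max_eq_right hle]; exact (hp2 n).le
    calc ∑' n, ENNReal.ofReal (max (p n).1 (p n).2 - (p n).1)
        ≤ ∑' n, (StieltjesFunction.id.length (t n) + e n) := ENNReal.tsum_le_tsum hterm
      _ = (∑' n, StieltjesFunction.id.length (t n)) + ∑' n, e n := ENNReal.tsum_add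
      _ < ENNReal.ofReal δ / 2 + ENNReal.ofReal δ / 2 := ENNReal.add_lt_add hlt hesum
      _ = ENNReal.ofReal δ := ENNReal.add_halves _

private lemma log_lipschitzOnWith {a : ℝ} (ha : 0 < a) :
    LipschitzOnWith (Real.toNNReal a⁻¹) Real.log (Ici a) := by
  rw [lipschitzOnWith_iff_dist_le_mul]
  have key : ∀ x ∈ Ici a, ∀ y ∈ Ici a, y ≤ x →
      Real.log x - Real.log y ≤ a⁻¹ * (x - y) := by
    intro x hx y hy hyx
    have hy0 : 0 < y := lt_of_lt_of_le ha hy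
    have hx0 : 0 < x := lt_of_lt_of_le hy0 hyx
    rw [← Real.log_div hx0.ne' hy0.ne']
    calc Real.log (x / y) ≤ x / y - 1 := Real.log_le_sub_one_of_pos (div_pos hx0 hy0)
      _ = (x - y) / y := by field_simp
      _ ≤ (x - y) / a := div_le_div_of_nonneg_left (sub_nonneg.2 hyx) ha hy
      _ = a⁻¹ * (x - y) := by rw [div_eq_inv_mul]
  intro x hx y hy
  rw [Real.dist_eq, Real.dist_eq, Real.coe_toNNReal _ (inv_nonneg.2 ha.le)]
  rcases le_total y x with h | h
  · rw [abs_of_nonneg (sub_nonneg.2 h),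
      abs_of_nonneg (sub_nonneg.2 (Real.log_le_log (lt_of_lt_of_le ha hy) h))]
    exact key x hx y hy h
  · rw [abs_of_nonpos (sub_nonpos.2 h),
      abs_of_nonpos (sub_nonpos.2 (Real.log_le_log (lt_of_lt_of_le ha hx) h)),
      neg_sub, neg_sub]
    exact key y hy x hx h

private lemma log_image_null_of_subset_Ici {a : ℝ} (ha : 0 < a) {s : Set ℝ}
    (hs : s ⊆ Ici a) (h : volume s = 0) : volume (Real.log '' s) = 0 := by
  have hlip : LipschitzOnWith (Real.toNNReal a⁻¹) Real.log s :=
    (log_lipschitzOnWith ha).mono hs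
  have hb := hlip.hausdorffMeasure_image_le (d := 1) zero_le_one
  rw [MeasureTheory.hausdorffMeasure_real] at hb
  refine le_antisymm ?_ zero_le
  calc volume (Real.log '' s) ≤ (Real.toNNReal a⁻¹ : ℝ≥0∞) ^ (1:ℝ) * volume s := hb
    _ = 0 := by rw [h, mul_zero]

private lemma log_image_null (U : Set ℝ) (hU : U ⊆ Ioi (0:ℝ))
    (h : volume U = 0) : volume (Real.log '' U) = 0 := by
  have hsub : Real.log '' U ⊆ ⋃ n : ℕ, Real.log '' (U ∩ Ici (Real.exp (-(n:ℝ)))) := by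
    rintro y ⟨u, hu, rfl⟩
    obtain ⟨n, hn⟩ := exists_nat_ge (-Real.log u)
    refine mem_iUnion.2 ⟨n, mem_image_of_mem _ ⟨hu, ?_⟩⟩
    calc Real.exp (-(n:ℝ)) ≤ Real.exp (Real.log u) := Real.exp_le_exp.2 (by linarith)
      _ = u := Real.exp_log (hU hu)
  refine measure_mono_null hsub (measure_iUnion_null fun n => ?_)
  exact log_image_null_of_subset_Ici (Real.exp_pos _) (fun x hx => hx.2)
    (measure_mono_null inter_subset_left h)

private lemma muE_le_one_of_null (U : Set ℝ) (hU : U ⊆ Ioi (0:ℝ))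
    (h : volume U = 0) : muE U ≤ 1 := by
  refine ENNReal.le_of_forall_pos_le_add fun ε hε _ => ?_
  have hε' : (0:ℝ) < ε := by exact_mod_cast hε
  have hδ : 0 < Real.log (1 + (ε:ℝ)) := Real.log_pos (by linarith)
  obtain ⟨c, hc1, hc2, hc3⟩ := coverA _ (log_image_null U hU h) _ hδ
  set c' : ℕ → ℝ × ℝ := fun j => (Real.exp (c j).1, Real.exp (c j).2) with hc'def
  have hcov : IsIntervalCover U c' := by
    constructor
    · intro j; exact ⟨Real.exp_pos _, Real.exp_le_exp.2 (hc1 j)⟩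
    · intro u hu
      obtain ⟨j, hj⟩ := mem_iUnion.1 (hc2 (mem_image_of_mem _ hu))
      have hu0 : 0 < u := hU hu
      refine mem_iUnion.2 ⟨j, ?_, ?_⟩
      · calc Real.exp (c j).1 ≤ Real.exp (Real.log u) := Real.exp_le_exp.2 hj.1
          _ = u := Real.exp_log hu0
      · calc u = Real.exp (Real.log u) := (Real.exp_log hu0).symm
          _ ≤ Real.exp (c j).2 := Real.exp_le_exp.2 hj.2
  have hle : muE U ≤ iProd (fun j => ENNReal.ofReal ((c' j).2 / (c' j).1)) := by
    rw [muE]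
    exact iInf_le (fun c : {c : ℕ → ℝ × ℝ // IsIntervalCover U c} =>
      iProd (fun j => ENNReal.ofReal ((c.1 j).2 / (c.1 j).1))) ⟨c', hcov⟩
  refine hle.trans ?_
  rw [iProd]
  refine iSup_le fun N => ?_
  have hnn : ∀ j ∈ Finset.range N, (0:ℝ) ≤ (c' j).2 / (c' j).1 :=
    fun j _ => div_nonneg (Real.exp_pos _).le (Real.exp_pos _).le
  rw [← ENNReal.ofReal_prod_of_nonneg hnn]
  have hprod : ∏ j ∈ Finset.range N, (c' j).2 / (c' j).1
      = Real.exp (∑ j ∈ Finset.range N, ((c j).2 - (c j).1)) := by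
    rw [Real.exp_sum]
    exact Finset.prod_congr rfl fun j _ => by rw [hc'def, Real.exp_sub]
  have hsum : ∑ j ∈ Finset.range N, ((c j).2 - (c j).1) ≤ Real.log (1 + (ε:ℝ)) := by
    have h1 : ENNReal.ofReal (∑ j ∈ Finset.range N, ((c j).2 - (c j).1))
        = ∑ j ∈ Finset.range N, ENNReal.ofReal ((c j).2 - (c j).1) :=
      ENNReal.ofReal_sum_of_nonneg fun j _ => sub_nonneg.2 (hc1 j)
    have h2 : (∑ j ∈ Finset.range N, ENNReal.ofReal ((c j).2 - (c j).1))
        ≤ ∑' j, ENNReal.ofReal ((c j).2 - (c j).1) := ENNReal.sum_le_tsum _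
    exact (ENNReal.ofReal_le_ofReal_iff hδ.le).1 ((h1 ▸ h2).trans hc3.le)
  rw [hprod]
  calc ENNReal.ofReal (Real.exp (∑ j ∈ Finset.range N, ((c j).2 - (c j).1)))
      ≤ ENNReal.ofReal (Real.exp (Real.log (1 + (ε:ℝ)))) :=
        ENNReal.ofReal_le_ofReal (Real.exp_le_exp.2 hsum)
    _ = ENNReal.ofReal (1 + (ε:ℝ)) := by rw [Real.exp_log (by positivity)]
    _ = 1 + (ε : ℝ≥0∞) := by
        rw [ENNReal.ofReal_add zero_le_one ε.coe_nonneg, ENNReal.ofReal_one,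
          ENNReal.ofReal_coe_nnreal]

private lemma sum_sub_le_prod (r : ℕ → ℝ) (hr : ∀ j, 1 ≤ r j) (N : ℕ) :
    ∑ j ∈ Finset.range N, (r j - 1) ≤ (∏ j ∈ Finset.range N, r j) - 1 := by
  induction N with
  | zero => simp
  | succ n ih =>
    rw [Finset.sum_range_succ, Finset.prod_range_succ]
    have hp : (1:ℝ) ≤ ∏ j ∈ Finset.range n, r j := by
      calc (1:ℝ) = ∏ _j ∈ Finset.range n, (1:ℝ) := by simp
        _ ≤ ∏ j ∈ Finset.range n, r j :=
          Finset.prod_le_prod (by simp) (fun j _ => hr j)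
    nlinarith [hr n]

private lemma null_of_muE_eq_one (U : Set ℝ) (hU : U ⊆ Ioi (0:ℝ))
    (h : muE U = 1) : volume U = 0 := by
  have claim : ∀ M : ℝ, 0 < M → volume (U ∩ Icc M⁻¹ M) = 0 := by
    intro M hM
    refine le_antisymm ?_ zero_le
    refine ENNReal.le_of_forall_pos_le_add fun ε' hε' _ => ?_
    rw [zero_add]
    have hε : (0:ℝ) < (ε':ℝ) / M := div_pos hε' hM
    have h1 : muE U < 1 + ENNReal.ofReal ((ε':ℝ) / M) := by
      rw [h]; exact ENNReal.lt_add_right ENNReal.one_ne_top (ENNReal.ofReal_pos.2 hε).ne'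
    rw [muE] at h1
    obtain ⟨⟨c, hcov⟩, hlt⟩ := iInf_lt_iff.1 h1
    set ε : ℝ := (ε':ℝ) / M with hεdef
    set r : ℕ → ℝ := fun j => (c j).2 / (c j).1 with hrdef
    have ha : ∀ j, 0 < (c j).1 := fun j => (hcov.1 j).1
    have hr : ∀ j, 1 ≤ r j := fun j => (one_le_div (ha j)).2 (hcov.1 j).2
    have prodbound : ∀ N : ℕ, ∏ j ∈ Finset.range N, r j ≤ 1 + ε := by
      intro N
      have h2 : ENNReal.ofReal (∏ j ∈ Finset.range N, r j) < ENNReal.ofReal (1 + ε) := by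
        rw [ENNReal.ofReal_prod_of_nonneg fun j _ => le_trans zero_le_one (hr j)]
        calc (∏ j ∈ Finset.range N, ENNReal.ofReal (r j))
            ≤ iProd (fun j => ENNReal.ofReal (r j)) := by
              rw [iProd]; exact le_iSup (fun N => ∏ j ∈ Finset.range N, ENNReal.ofReal (r j)) N
          _ < 1 + ENNReal.ofReal ε := hlt
          _ = ENNReal.ofReal (1 + ε) := by
              rw [ENNReal.ofReal_add zero_le_one hε.le, ENNReal.ofReal_one]
      exact le_of_lt ((ENNReal.ofReal_lt_ofReal_iff_of_nonneg
        (Finset.prod_nonneg fun j _ => le_trans zero_le_one (hr j))).1 h2)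
    have tsumbound : ∑' j, ENNReal.ofReal (r j - 1) ≤ ENNReal.ofReal ε := by
      rw [ENNReal.tsum_eq_iSup_sum]
      refine iSup_le fun F => ?_
      obtain ⟨N, hFN⟩ := Finset.exists_nat_subset_range F
      calc ∑ j ∈ F, ENNReal.ofReal (r j - 1)
          ≤ ∑ j ∈ Finset.range N, ENNReal.ofReal (r j - 1) :=
            Finset.sum_le_sum_of_subset hFN
        _ = ENNReal.ofReal (∑ j ∈ Finset.range N, (r j - 1)) :=
            (ENNReal.ofReal_sum_of_nonneg fun j _ => sub_nonneg.2 (hr j)).symm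
        _ ≤ ENNReal.ofReal ε := ENNReal.ofReal_le_ofReal
            (le_trans (sum_sub_le_prod r hr N) (by linarith [prodbound N]))
    have hcover2 : U ∩ Icc M⁻¹ M ⊆ ⋃ j, (Icc (c j).1 (c j).2 ∩ Icc M⁻¹ M) := by
      intro x hx
      obtain ⟨j, hj⟩ := mem_iUnion.1 (hcov.2 hx.1)
      exact mem_iUnion.2 ⟨j, hj, hx.2⟩
    have hterm : ∀ j, volume (Icc (c j).1 (c j).2 ∩ Icc M⁻¹ M)
        ≤ ENNReal.ofReal M * ENNReal.ofReal (r j - 1) := by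
      intro j
      rcases eq_empty_or_nonempty (Icc (c j).1 (c j).2 ∩ Icc M⁻¹ M) with he | ⟨x, hx⟩
      · simp [he]
      · have haM : (c j).1 ≤ M := le_trans hx.1.1 hx.2.2
        have e1 : (c j).1 * (r j - 1) = (c j).2 - (c j).1 := by
          rw [hrdef, mul_sub, mul_one, mul_div_cancel₀ _ (ha j).ne']
        have key : (c j).2 - (c j).1 ≤ M * (r j - 1) := by
          rw [← e1]
          exact mul_le_mul_of_nonneg_right haM (sub_nonneg.2 (hr j))
        calc volume (Icc (c j).1 (c j).2 ∩ Icc M⁻¹ M)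
            ≤ volume (Icc (c j).1 (c j).2) := measure_mono inter_subset_left
          _ = ENNReal.ofReal ((c j).2 - (c j).1) := Real.volume_Icc
          _ ≤ ENNReal.ofReal (M * (r j - 1)) := ENNReal.ofReal_le_ofReal key
          _ = ENNReal.ofReal M * ENNReal.ofReal (r j - 1) := ENNReal.ofReal_mul hM.le
    calc volume (U ∩ Icc M⁻¹ M)
        ≤ ∑' j, volume (Icc (c j).1 (c j).2 ∩ Icc M⁻¹ M) :=
          (measure_mono hcover2).trans (measure_iUnion_le _)
      _ ≤ ∑' j, ENNReal.ofReal M * ENNReal.ofReal (r j - 1) := ENNReal.tsum_le_tsum hterm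
      _ = ENNReal.ofReal M * ∑' j, ENNReal.ofReal (r j - 1) := ENNReal.tsum_mul_left
      _ ≤ ENNReal.ofReal M * ENNReal.ofReal ε := mul_le_mul_right tsumbound _
      _ = ENNReal.ofReal (M * ε) := (ENNReal.ofReal_mul hM.le).symm
      _ = (ε' : ℝ≥0∞) := by
          rw [show M * ε = (ε':ℝ) by rw [hεdef]; field_simp, ENNReal.ofReal_coe_nnreal]
  have hsub : U ⊆ ⋃ n : ℕ, U ∩ Icc ((n:ℝ)+1)⁻¹ ((n:ℝ)+1) := by
    intro u hu
    have hu0 : 0 < u := hU hu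
    obtain ⟨n, hn⟩ := exists_nat_ge (max u u⁻¹)
    have hn1 : max u u⁻¹ ≤ (n:ℝ) + 1 := hn.trans (by linarith)
    refine mem_iUnion.2 ⟨n, hu, ?_, le_trans (le_max_left _ _) hn1⟩
    have h1 : u⁻¹ ≤ (n:ℝ)+1 := le_trans (le_max_right _ _) hn1
    rw [← inv_inv u]
    exact inv_anti₀ (inv_pos.2 hu0) h1
  exact measure_mono_null hsub (measure_iUnion_null fun n => claim _ (by positivity))

theorem stmt15 (U : Set ℝ) (hU : U ⊆ Set.Ioi (0:ℝ)) :
    muE U = 1 ↔ MeasureTheory.volume U = 0 := by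
  constructor
  · exact fun h => null_of_muE_eq_one U hU h
  · exact fun h => le_antisymm (muE_le_one_of_null U hU h) (one_le_muE U)
end
end

section
/- A set E ⊆ (0,∞) is μ-measurable with respect to the multiplicative exterior measure μₑ if and only if E is Lebesgue measurable, and in that case μ(E) = exp(∫_E (1/x) dx), where the integral is the Lebesgue integral (with exp(+∞) interpreted as +∞). -/
open scoped ENNReal
open Set

noncomputable section

/-! ### Auxiliary lemmas -/

open MeasureTheory

lemma expE_top : expE ⊤ = ⊤ := rfl

lemma expE_ne_top {t : ℝ≥0∞} (h : t ≠ ⊤) : expE t = ENNReal.ofReal (Real.exp t.toReal) := by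
  simp [expE, h]

lemma expE_mono : Monotone expE := by
  intro s t hst
  rcases eq_or_ne t ⊤ with rfl | ht
  · simp [expE]
  · have hs : s ≠ ⊤ := fun h => ht (top_le_iff.mp (h ▸ hst))
    rw [expE_ne_top hs, expE_ne_top ht]
    exact ENNReal.ofReal_le_ofReal (Real.exp_le_exp.2 (ENNReal.toReal_mono ht hst))

lemma expE_iInf {ι : Sort*} [Nonempty ι] (u : ι → ℝ≥0∞) :
    expE (⨅ i, u i) = ⨅ i, expE (u i) := by
  refine le_antisymm (le_iInf fun i => expE_mono (iInf_le u i)) ?_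
  set t := ⨅ i, u i with ht
  rcases eq_or_ne t ⊤ with h | h
  · have hall : ∀ i, u i = ⊤ := iInf_eq_top.mp (ht ▸ h)
    simp [h, expE_top, hall, expE_top]
  · rw [expE_ne_top h]
    have key : ∀ ε : ℝ, 0 < ε → (⨅ i, expE (u i)) ≤ ENNReal.ofReal (Real.exp (t.toReal + ε)) := by
      intro ε hε
      have : t < t + ENNReal.ofReal ε :=
        ENNReal.lt_add_right h (by simp [hε, ENNReal.ofReal_eq_zero, not_le])
      obtain ⟨i, hi⟩ := iInf_lt_iff.mp (ht ▸ this)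
      have hiu : u i ≠ ⊤ := (hi.trans_le le_top).ne
      refine (iInf_le _ i).trans ?_
      rw [expE_ne_top hiu]
      refine ENNReal.ofReal_le_ofReal (Real.exp_le_exp.2 ?_)
      have := ENNReal.toReal_mono (by finiteness) hi.le
      rw [ENNReal.toReal_add h ENNReal.ofReal_ne_top, ENNReal.toReal_ofReal hε.le] at this
      exact this
    have htend : Filter.Tendsto (fun n : ℕ => ENNReal.ofReal (Real.exp (t.toReal + 1/(n+1))))
        Filter.atTop (nhds (ENNReal.ofReal (Real.exp t.toReal))) := by
      have h1 : Filter.Tendsto (fun n : ℕ => (1:ℝ)/(n+1)) Filter.atTop (nhds 0) :=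
        tendsto_one_div_add_atTop_nhds_zero_nat
      have h2 : Continuous fun x : ℝ => ENNReal.ofReal (Real.exp (t.toReal + x)) :=
        ENNReal.continuous_ofReal.comp
          ((Real.continuous_exp).comp (continuous_const.add continuous_id))
      simpa [Function.comp_def] using (h2.tendsto 0).comp h1
    exact ge_of_tendsto' htend fun n => key _ (by positivity)

lemma iSup_ofReal_top (S : ℕ → ℝ) (hub : ∀ M : ℝ, ∃ N, M < S N) :
    (⨆ N, ENNReal.ofReal (S N)) = ⊤ := by
  refine ENNReal.eq_top_of_forall_nnreal_le fun M => ?_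
  obtain ⟨N, hN⟩ := hub M
  calc (M : ℝ≥0∞) = ENNReal.ofReal (M : ℝ) := ENNReal.ofReal_coe_nnreal.symm
    _ ≤ ENNReal.ofReal (S N) := ENNReal.ofReal_le_ofReal hN.le
    _ ≤ _ := le_iSup (fun N => ENNReal.ofReal (S N)) N

lemma iSup_ofReal_of_tendsto {S : ℕ → ℝ} {l : ℝ} (hle : ∀ N, S N ≤ l)
    (h : Filter.Tendsto S Filter.atTop (nhds l)) :
    (⨆ N, ENNReal.ofReal (S N)) = ENNReal.ofReal l := by
  refine le_antisymm (iSup_le fun N => ENNReal.ofReal_le_ofReal (hle N)) ?_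
  refine le_of_tendsto ((ENNReal.continuous_ofReal.tendsto l).comp h)
    (Filter.Eventually.of_forall fun N => le_iSup (fun N => ENNReal.ofReal (S N)) N)

lemma iProd_exp (t : ℕ → ℝ) (ht : ∀ j, 0 ≤ t j) :
    iProd (fun j => ENNReal.ofReal (Real.exp (t j))) = expE (∑' j, ENNReal.ofReal (t j)) := by
  set S : ℕ → ℝ := fun N => ∑ j ∈ Finset.range N, t j with hS
  have hSmono : Monotone S := fun m n hmn =>
    Finset.sum_le_sum_of_subset_of_nonneg (Finset.range_subset_range.2 hmn) (fun j _ _ => ht j)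
  have hS0 : ∀ N, 0 ≤ S N := fun N => Finset.sum_nonneg fun j _ => ht j
  have hprod : ∀ N, (∏ j ∈ Finset.range N, ENNReal.ofReal (Real.exp (t j)))
      = ENNReal.ofReal (Real.exp (S N)) := by
    intro N
    induction N with
    | zero => simp [hS]
    | succ n ih =>
      rw [Finset.prod_range_succ, ih]
      show _ = ENNReal.ofReal (Real.exp (∑ j ∈ Finset.range (n+1), t j))
      rw [Finset.sum_range_succ, Real.exp_add, ENNReal.ofReal_mul (Real.exp_nonneg _)]
  have hsum : (∑' j, ENNReal.ofReal (t j)) = ⨆ N, ENNReal.ofReal (S N) := by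
    rw [ENNReal.tsum_eq_iSup_nat]
    congr 1; funext N
    rw [hS]
    exact (ENNReal.ofReal_sum_of_nonneg fun j _ => ht j).symm
  rw [iProd, hsum]
  simp only [hprod]
  by_cases hbdd : BddAbove (Set.range S)
  · set l := ⨆ N, S N with hl
    have hle : ∀ N, S N ≤ l := fun N => le_ciSup hbdd N
    have htend : Filter.Tendsto S Filter.atTop (nhds l) := tendsto_atTop_ciSup hSmono hbdd
    have hl0 : 0 ≤ l := (hS0 0).trans (hle 0)
    rw [iSup_ofReal_of_tendsto hle htend,
      iSup_ofReal_of_tendsto (fun N => Real.exp_le_exp.2 (hle N))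
        ((Real.continuous_exp.tendsto l).comp htend),
      expE_ne_top ENNReal.ofReal_ne_top, ENNReal.toReal_ofReal hl0]
  · have hub : ∀ M : ℝ, ∃ N, M < S N := by
      intro M
      obtain ⟨y, ⟨N, rfl⟩, hy⟩ := not_bddAbove_iff.mp hbdd M
      exact ⟨N, hy⟩
    rw [iSup_ofReal_top S hub, iSup_ofReal_top _ (fun M => by
      obtain ⟨N, hN⟩ := hub M
      exact ⟨N, hN.trans_le (Real.exp_le_exp.2 le_rfl |>.trans' (by
        linarith [Real.add_one_le_exp (S N)]))⟩), expE_top]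

/-- Countable covers of `A ⊆ ℝ` by closed intervals. -/
def IsLenCover (A : Set ℝ) (d : ℕ → ℝ × ℝ) : Prop :=
  (∀ j, (d j).1 ≤ (d j).2) ∧ A ⊆ ⋃ j, Set.Icc (d j).1 (d j).2

/-- The Lebesgue outer measure via covers by closed intervals. -/
def L (A : Set ℝ) : ℝ≥0∞ :=
  ⨅ d : {d : ℕ → ℝ × ℝ // IsLenCover A d}, ∑' j, ENNReal.ofReal ((d.1 j).2 - (d.1 j).1)

lemma volume_le_L (A : Set ℝ) : volume A ≤ L A := by
  refine le_iInf fun d => ?_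
  calc volume A ≤ volume (⋃ j, Set.Icc (d.1 j).1 (d.1 j).2) := measure_mono d.2.2
    _ ≤ ∑' j, volume (Set.Icc (d.1 j).1 (d.1 j).2) := measure_iUnion_le _
    _ = ∑' j, ENNReal.ofReal ((d.1 j).2 - (d.1 j).1) := by simp [Real.volume_Icc]

lemma L_le_volume (A : Set ℝ) : L A ≤ volume A := by
  have hvol : volume A = StieltjesFunction.id.outer A := by
    rw [Real.volume_val, ← MeasureTheory.Measure.coe_toOuterMeasure, StieltjesFunction.measure]
  rw [hvol, StieltjesFunction.outer, OuterMeasure.ofFunction_apply]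
  refine le_iInf₂ fun t hcov => ?_
  set S := ∑' n, StieltjesFunction.id.length (t n) with hSdef
  rcases eq_or_ne S ⊤ with hS | hS
  · exact hS ▸ le_top
  refine ENNReal.le_of_forall_pos_le_add fun ε hε _ => ?_
  obtain ⟨δ, hδpos, hδsum⟩ := ENNReal.exists_pos_sum_of_countable'
    (ε := (ε : ℝ≥0∞)) (by exact_mod_cast hε.ne') ℕ
  have hlen : ∀ n, StieltjesFunction.id.length (t n) ≠ ⊤ :=
    fun n => ne_top_of_le_ne_top hS (ENNReal.le_tsum n)
  have key : ∀ n, ∃ p : ℝ × ℝ, p.1 ≤ p.2 ∧ t n ⊆ Set.Icc p.1 p.2 ∧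
      ENNReal.ofReal (p.2 - p.1) ≤ StieltjesFunction.id.length (t n) + δ n := by
    intro n
    have hlt : StieltjesFunction.id.length (t n)
        < StieltjesFunction.id.length (t n) + δ n :=
      ENNReal.lt_add_right (hlen n) (hδpos n).ne'
    rw [StieltjesFunction.length, if_neg (not_isEmpty_of_nonempty ℝ)] at hlt
    obtain ⟨a, ha⟩ := iInf_lt_iff.mp hlt
    obtain ⟨b, hb⟩ := iInf_lt_iff.mp ha
    obtain ⟨hsub, hval⟩ := iInf_lt_iff.mp hb
    refine ⟨(a, max a b), le_max_left _ _, ?_, ?_⟩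
    · exact fun x hx => ⟨(hsub ⟨hx, not_isBot x⟩).1.le, le_max_of_le_right (hsub ⟨hx, not_isBot x⟩).2⟩
    · have : ENNReal.ofReal (max a b - a) = ENNReal.ofReal (b - a) := by
        rcases le_total a b with h | h
        · rw [max_eq_right h]
        · rw [max_eq_left h, sub_self, ENNReal.ofReal_zero,
            (ENNReal.ofReal_eq_zero).mpr (by linarith)]
      rw [this]
      calc ENNReal.ofReal (b - a)
          ≤ (StieltjesFunction.id.toFun b - StieltjesFunction.id.toFun a).toNNReal :=
            le_of_eq (by rfl)
        _ ≤ _ := hval.le.trans_eq (by rw [StieltjesFunction.length, if_neg (not_isEmpty_of_nonempty ℝ)])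
  choose p hple hpsub hpval using key
  have hc : IsLenCover A p :=
    ⟨hple, hcov.trans (iUnion_mono fun n => hpsub n)⟩
  calc L A ≤ ∑' j, ENNReal.ofReal ((p j).2 - (p j).1) := iInf_le (fun d : {d : ℕ → ℝ × ℝ // IsLenCover A d} => ∑' j, ENNReal.ofReal ((d.1 j).2 - (d.1 j).1)) ⟨p, hc⟩
    _ ≤ ∑' j, (StieltjesFunction.id.length (t j) + δ j) := ENNReal.tsum_le_tsum hpval
    _ = S + ∑' j, δ j := by rw [ENNReal.tsum_add]
    _ ≤ S + ε := add_le_add le_rfl hδsum.le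

lemma L_eq_volume (A : Set ℝ) : L A = volume A :=
  le_antisymm (L_le_volume A) (volume_le_L A)

lemma cover_nonempty {E : Set ℝ} (hE : E ⊆ Set.Ioi (0:ℝ)) :
    Nonempty {c : ℕ → ℝ × ℝ // IsIntervalCover E c} := by
  refine ⟨⟨fun j => (1/(j+1 : ℝ), (j+1 : ℝ)), ⟨fun j => ?_, fun x hx => ?_⟩⟩⟩
  · have hj : (0:ℝ) < (j:ℝ)+1 := by positivity
    have hj1 : (1:ℝ) ≤ (j:ℝ)+1 := by
      have := Nat.cast_nonneg (α := ℝ) j; linarith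
    constructor
    · show (0:ℝ) < 1/((j:ℝ)+1); positivity
    · show (1:ℝ)/((j:ℝ)+1) ≤ (j:ℝ)+1
      calc (1:ℝ)/((j:ℝ)+1) ≤ 1 := by rw [div_le_one hj]; exact hj1
        _ ≤ (j:ℝ)+1 := hj1
  · have hx0 : 0 < x := hE hx
    obtain ⟨n, hn⟩ := exists_nat_ge (max x (1/x))
    refine mem_iUnion.2 ⟨n, ?_, ?_⟩
    · show (1:ℝ)/((n:ℝ)+1) ≤ x
      have hn2 : 1/x ≤ (n:ℝ)+1 := le_trans (le_max_right _ _) (hn.trans (by linarith))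
      rw [div_le_iff₀ (by positivity)]
      rw [div_le_iff₀ hx0] at hn2
      linarith
    · show x ≤ (n:ℝ)+1
      have := le_trans (le_max_left x (1/x)) hn
      linarith

lemma exp_preimage_mem {E : Set ℝ} (hE : E ⊆ Set.Ioi (0:ℝ)) {x : ℝ} (hx : x ∈ E) :
    Real.log x ∈ Real.exp ⁻¹' E := by
  simpa [mem_preimage, Real.exp_log (hE hx)] using hx

/-- The multiplicative outer measure is the exponential of Lebesgue outer measure of the
logarithmic image. -/
lemma muE_eq {E : Set ℝ} (hE : E ⊆ Set.Ioi (0:ℝ)) :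
    muE E = expE (volume (Real.exp ⁻¹' E)) := by
  haveI : Nonempty {c : ℕ → ℝ × ℝ // IsIntervalCover E c} := cover_nonempty hE
  set A := Real.exp ⁻¹' E with hA
  have step1 : muE E = ⨅ c : {c : ℕ → ℝ × ℝ // IsIntervalCover E c},
      expE (∑' j, ENNReal.ofReal (Real.log ((c.1 j).2 / (c.1 j).1))) := by
    rw [muE]
    refine iInf_congr fun c => ?_
    have hpos : ∀ j, 0 < (c.1 j).2 / (c.1 j).1 := fun j =>
      div_pos ((c.2.1 j).1.trans_le (c.2.1 j).2) (c.2.1 j).1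
    have hge1 : ∀ j, (1:ℝ) ≤ (c.1 j).2 / (c.1 j).1 := fun j =>
      (one_le_div (c.2.1 j).1).2 (c.2.1 j).2
    have hlog0 : ∀ j, 0 ≤ Real.log ((c.1 j).2 / (c.1 j).1) := fun j =>
      Real.log_nonneg (hge1 j)
    rw [← iProd_exp _ hlog0]
    congr 1; funext j
    rw [Real.exp_log (hpos j)]
  rw [step1, ← expE_iInf, ← L_eq_volume]
  congr 1
  apply le_antisymm
  · refine le_iInf fun d => ?_
    set c : ℕ → ℝ × ℝ := fun j => (Real.exp (d.1 j).1, Real.exp (d.1 j).2) with hc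
    have hcov : IsIntervalCover E c := by
      refine ⟨fun j => ⟨Real.exp_pos _, Real.exp_le_exp.2 (d.2.1 j)⟩, fun x hx => ?_⟩
      have hx0 : 0 < x := hE hx
      obtain ⟨j, hj⟩ := mem_iUnion.mp (d.2.2 (exp_preimage_mem hE hx))
      refine mem_iUnion.2 ⟨j, ?_, ?_⟩
      · calc Real.exp (d.1 j).1 ≤ Real.exp (Real.log x) := Real.exp_le_exp.2 hj.1
          _ = x := Real.exp_log hx0
      · calc x = Real.exp (Real.log x) := (Real.exp_log hx0).symm
          _ ≤ Real.exp (d.1 j).2 := Real.exp_le_exp.2 hj.2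
    refine (iInf_le _ ⟨c, hcov⟩).trans (le_of_eq (tsum_congr fun j => ?_))
    show ENNReal.ofReal (Real.log (Real.exp (d.1 j).2 / Real.exp (d.1 j).1)) = _
    rw [← Real.exp_sub, Real.log_exp]
  · refine le_iInf fun c => ?_
    set d : ℕ → ℝ × ℝ := fun j => (Real.log (c.1 j).1, Real.log (c.1 j).2) with hd
    have hcov : IsLenCover A d := by
      refine ⟨fun j => Real.log_le_log (c.2.1 j).1 (c.2.1 j).2, fun y hy => ?_⟩
      have hey : Real.exp y ∈ E := hy
      obtain ⟨j, hj⟩ := mem_iUnion.mp (c.2.2 hey)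
      refine mem_iUnion.2 ⟨j, ?_, ?_⟩
      · calc Real.log (c.1 j).1 ≤ Real.log (Real.exp y) :=
            Real.log_le_log (c.2.1 j).1 hj.1
          _ = y := Real.log_exp y
      · calc y = Real.log (Real.exp y) := (Real.log_exp y).symm
          _ ≤ Real.log (c.1 j).2 :=
            Real.log_le_log (Real.exp_pos y) hj.2
    refine (iInf_le _ ⟨d, hcov⟩).trans (le_of_eq (tsum_congr fun j => ?_))
    show ENNReal.ofReal (Real.log (c.1 j).2 - Real.log (c.1 j).1)
        = ENNReal.ofReal (Real.log ((c.1 j).2 / (c.1 j).1))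
    have h1 : (c.1 j).1 ≠ 0 := (c.2.1 j).1.ne'
    have h2 : (c.1 j).2 ≠ 0 := ((c.2.1 j).1.trans_le (c.2.1 j).2).ne'
    simp [Real.log_div h2 h1]

lemma expMeasEmb : MeasurableEmbedding Real.exp :=
  Real.continuous_exp.measurableEmbedding Real.exp_injective

lemma image_exp_null {A : Set ℝ} (h : volume A = 0) : volume (Real.exp '' A) = 0 :=
  addHaar_image_eq_zero_of_differentiableOn_of_addHaar_eq_zero volume
    Real.differentiable_exp.differentiableOn h

lemma preimage_exp_null {N : Set ℝ} (h : volume N = 0) : volume (Real.exp ⁻¹' N) = 0 := by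
  have h1 : Real.exp ⁻¹' N = Real.log '' (N ∩ Ioi 0) := by
    ext y
    simp only [mem_preimage, mem_image, mem_inter_iff, mem_Ioi]
    constructor
    · intro hy
      exact ⟨Real.exp y, ⟨hy, Real.exp_pos y⟩, Real.log_exp y⟩
    · rintro ⟨x, ⟨hx, hx0⟩, rfl⟩
      rwa [Real.exp_log hx0]
  rw [h1]
  refine addHaar_image_eq_zero_of_differentiableOn_of_addHaar_eq_zero volume
    (fun x (hx : x ∈ N ∩ Ioi 0) =>
      (Real.differentiableAt_log (ne_of_gt hx.2)).differentiableWithinAt) ?_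
  exact measure_mono_null inter_subset_left h

lemma nullMeasurable_preimage_exp {E : Set ℝ} (h : NullMeasurableSet E volume) :
    NullMeasurableSet (Real.exp ⁻¹' E) volume := by
  obtain ⟨t, ht, hEt⟩ := h
  refine NullMeasurableSet.congr (ht.preimage expMeasEmb.measurable).nullMeasurableSet ?_
  have : volume (symmDiff E t) = 0 := by
    rw [measure_symmDiff_eq_zero_iff]; exact hEt
  have h2 : volume (symmDiff (Real.exp ⁻¹' t) (Real.exp ⁻¹' E)) = 0 := by
    rw [← preimage_symmDiff]
    exact preimage_exp_null (by rwa [symmDiff_comm] at this)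
  rw [← measure_symmDiff_eq_zero_iff] at *
  exact h2

lemma nullMeasurable_image_exp {A : Set ℝ} (h : NullMeasurableSet A volume) :
    NullMeasurableSet (Real.exp '' A) volume := by
  obtain ⟨t, ht, hAt⟩ := h
  refine NullMeasurableSet.congr (expMeasEmb.measurableSet_image' ht).nullMeasurableSet ?_
  have h0 : volume (symmDiff A t) = 0 := measure_symmDiff_eq_zero_iff.2 hAt
  have h2 : volume (symmDiff (Real.exp '' t) (Real.exp '' A)) = 0 := by
    refine measure_mono_null ?_ (image_exp_null (by rwa [symmDiff_comm] at h0))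
    rw [← Set.image_symmDiff Real.exp_injective]
  rw [← measure_symmDiff_eq_zero_iff]
  exact h2

lemma lintegral_inv_image_exp {C : Set ℝ} (hC : MeasurableSet C) :
    ∫⁻ x in Real.exp '' C, ENNReal.ofReal x⁻¹ = volume C := by
  have := lintegral_image_eq_lintegral_abs_det_fderiv_mul volume hC
    (f' := fun x => (1 : ℝ →L[ℝ] ℝ).smulRight (Real.exp x))
    (fun x _ => ((Real.hasDerivAt_exp x).hasFDerivAt).hasFDerivWithinAt)
    (Real.exp_injective.injOn) (fun x => ENNReal.ofReal x⁻¹)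
  rw [this]
  have : ∀ x ∈ C, ENNReal.ofReal |((1 : ℝ →L[ℝ] ℝ).smulRight (Real.exp x)).det|
      * ENNReal.ofReal (Real.exp x)⁻¹ = 1 := by
    intro x _
    rw [ContinuousLinearMap.smulRight_one_eq_toSpanSingleton, ContinuousLinearMap.det_toSpanSingleton, abs_of_pos (Real.exp_pos x),
      ← ENNReal.ofReal_mul (Real.exp_nonneg x), mul_inv_cancel₀ (Real.exp_ne_zero x),
      ENNReal.ofReal_one]
  rw [setLIntegral_congr_fun hC this]
  simp

lemma le_of_expE_lt {v : ℝ≥0∞} {δ : ℝ} (hδ : 0 < δ) (h : expE v < ENNReal.ofReal (1+δ)) :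
    v ≤ ENNReal.ofReal δ := by
  have hv : v ≠ ⊤ := by
    rintro rfl
    rw [expE_top] at h
    exact not_top_lt h
  rw [expE_ne_top hv] at h
  have h1 : Real.exp v.toReal < 1 + δ :=
    (ENNReal.ofReal_lt_ofReal_iff (by linarith)).1 h
  have h2 : Real.exp v.toReal < Real.exp δ :=
    h1.trans_le (by linarith [Real.add_one_le_exp δ])
  have h3 : v.toReal < δ := Real.exp_lt_exp.1 h2
  rw [← ENNReal.ofReal_toReal hv]
  exact ENNReal.ofReal_le_ofReal h3.le

lemma expE_lt_of_lt {v : ℝ≥0∞} {ε : ℝ} (hε : 0 < ε)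
    (h : v < ENNReal.ofReal (Real.log (1+ε))) : expE v < ENNReal.ofReal (1+ε) := by
  have hv : v ≠ ⊤ := (h.trans_le le_top).ne
  rw [expE_ne_top hv]
  have h1 : v.toReal < Real.log (1+ε) := (ENNReal.lt_ofReal_iff_toReal_lt hv).1 h
  have h2 : Real.exp v.toReal < 1+ε := by
    calc Real.exp v.toReal < Real.exp (Real.log (1+ε)) := Real.exp_lt_exp.2 h1
      _ = 1+ε := Real.exp_log (by linarith)
  exact (ENNReal.ofReal_lt_ofReal_iff (by linarith)).2 h2

lemma mu_forward {E : Set ℝ} (hE : E ⊆ Set.Ioi (0:ℝ)) (h : MuMeasurable E) :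
    NullMeasurableSet E volume := by
  set A := Real.exp ⁻¹' E with hA
  have key : ∀ n : ℕ, ∃ U : Set ℝ, IsOpen U ∧ A ⊆ U ∧
      volume (U \ A) ≤ ENNReal.ofReal (1/(n+1)) := by
    intro n
    obtain ⟨G, hGopen, hGpos, hEG, hmu⟩ := h.2 (1/(n+1)) (by positivity)
    refine ⟨Real.exp ⁻¹' G, hGopen.preimage Real.continuous_exp, preimage_mono hEG, ?_⟩
    have hsub : G \ E ⊆ Set.Ioi (0:ℝ) := fun x hx => hGpos hx.1
    rw [muE_eq hsub, Set.preimage_diff] at hmu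
    exact le_of_expE_lt (by positivity) hmu
  choose U hUopen hAU hUle using key
  set B := ⋂ n, U n with hB
  have hABn : volume (B \ A) = 0 := by
    have hle : ∀ n : ℕ, volume (B \ A) ≤ ENNReal.ofReal (1/((n:ℝ)+1)) := fun n =>
      le_trans (measure_mono (diff_subset_diff_left (iInter_subset U n))) (hUle n)
    refine le_antisymm ?_ zero_le
    have htend : Filter.Tendsto (fun n : ℕ => ENNReal.ofReal (1/(n+1)))
        Filter.atTop (nhds 0) := by
      have := (ENNReal.continuous_ofReal.tendsto 0).comp
        (tendsto_one_div_add_atTop_nhds_zero_nat)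
      simpa [Function.comp_def] using this
    exact ge_of_tendsto' htend hle
  have hAnm : NullMeasurableSet A volume := by
    have hsub : A ⊆ B := subset_iInter hAU
    have : A = B \ (B \ A) := (diff_diff_cancel_left hsub).symm
    rw [this]
    exact ((MeasurableSet.iInter fun n =>
      (hUopen n).measurableSet).nullMeasurableSet).diff
      (NullMeasurableSet.of_null hABn)
  have hEimg : E = Real.exp '' A := by
    rw [hA, Set.image_preimage_eq_inter_range, Real.range_exp, inter_eq_left.2 hE]
  rw [hEimg]
  exact nullMeasurable_image_exp hAnm

lemma open_approx {C : Set ℝ} (hC : MeasurableSet C) {δ : ℝ≥0∞} (hδ : δ ≠ 0) :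
    ∃ U, IsOpen U ∧ C ⊆ U ∧ volume (U \ C) < δ := by
  obtain ⟨δs, hδpos, hδsum⟩ := ENNReal.exists_pos_sum_of_countable' hδ ℕ
  have key : ∀ n : ℕ, ∃ U, U ⊇ C ∩ Ioo (-(n+1):ℝ) (n+1) ∧ IsOpen U ∧
      volume (U \ (C ∩ Ioo (-(n+1):ℝ) (n+1))) < δs n := by
    intro n
    have hfin : volume (C ∩ Ioo (-(n+1):ℝ) (n+1)) ≠ ⊤ := by
      refine ne_top_of_le_ne_top ?_ (measure_mono inter_subset_right)
      simp [Real.volume_Ioo]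
    obtain ⟨V, h1, h2, _, h4⟩ := (hC.inter measurableSet_Ioo).exists_isOpen_diff_lt hfin
      (hδpos n).ne'
    exact ⟨V, h1, h2, h4⟩
  choose U hUsup hUopen hUlt using key
  refine ⟨⋃ n, U n, isOpen_iUnion hUopen, ?_, ?_⟩
  · intro x hx
    obtain ⟨n, hn⟩ := exists_nat_gt |x|
    refine mem_iUnion.2 ⟨n, hUsup n ⟨hx, ?_, ?_⟩⟩
    · have := neg_abs_le x; linarith
    · have := le_abs_self x; linarith
  · have hsub : (⋃ n, U n) \ C ⊆ ⋃ n, (U n \ (C ∩ Ioo (-(n+1):ℝ) (n+1))) := by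
      intro x hx
      obtain ⟨n, hn⟩ := mem_iUnion.mp hx.1
      exact mem_iUnion.2 ⟨n, hn, fun hc => hx.2 hc.1⟩
    calc volume ((⋃ n, U n) \ C)
        ≤ ∑' n, volume (U n \ (C ∩ Ioo (-(n+1):ℝ) (n+1))) :=
          le_trans (measure_mono hsub) (measure_iUnion_le _)
      _ ≤ ∑' n, δs n := ENNReal.tsum_le_tsum fun n => (hUlt n).le
      _ < δ := hδsum

lemma mu_backward {E : Set ℝ} (hE : E ⊆ Set.Ioi (0:ℝ))
    (h : NullMeasurableSet E volume) : MuMeasurable E := by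
  refine ⟨hE, fun ε hε => ?_⟩
  set A := Real.exp ⁻¹' E with hA
  have hAnm : NullMeasurableSet A volume := nullMeasurable_preimage_exp h
  set C := toMeasurable volume A with hC
  have hAC : A ⊆ C := subset_toMeasurable _ _
  have hCA : volume (C \ A) = 0 := (ae_eq_set.mp hAnm.toMeasurable_ae_eq).1
  have hδ : (0:ℝ) < Real.log (1+ε) := Real.log_pos (by linarith)
  obtain ⟨U, hUopen, hCU, hUC⟩ := open_approx (measurableSet_toMeasurable volume A)
    (δ := ENNReal.ofReal (Real.log (1+ε))) (by simp [ENNReal.ofReal_eq_zero, not_le, hδ])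
  have hUA : volume (U \ A) < ENNReal.ofReal (Real.log (1+ε)) := by
    have hsub : U \ A ⊆ (U \ C) ∪ (C \ A) := by
      intro x hx
      by_cases hxC : x ∈ C
      · exact Or.inr ⟨hxC, hx.2⟩
      · exact Or.inl ⟨hx.1, hxC⟩
    calc volume (U \ A) ≤ volume (U \ C) + volume (C \ A) :=
          le_trans (measure_mono hsub) (measure_union_le _ _)
      _ = volume (U \ C) := by rw [hCA, add_zero]
      _ < _ := hUC
  refine ⟨Real.exp '' U, ?_, ?_, ?_, ?_⟩
  · have himg : Real.exp '' U = Ioi 0 ∩ Real.log ⁻¹' U := by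
      ext x
      simp only [mem_image, mem_inter_iff, mem_Ioi, mem_preimage]
      constructor
      · rintro ⟨y, hy, rfl⟩
        exact ⟨Real.exp_pos y, by rwa [Real.log_exp]⟩
      · rintro ⟨hx0, hlog⟩
        exact ⟨Real.log x, hlog, Real.exp_log hx0⟩
    rw [himg]
    exact (Real.continuousOn_log.mono fun x (hx : x ∈ Ioi (0:ℝ)) =>
      ne_of_gt hx).isOpen_inter_preimage isOpen_Ioi hUopen
  · rintro x ⟨y, _, rfl⟩
    exact Real.exp_pos y
  · intro x hx
    exact ⟨Real.log x, hCU (hAC (exp_preimage_mem hE hx)), Real.exp_log (hE hx)⟩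
  · have hsub : Real.exp '' U \ E ⊆ Set.Ioi (0:ℝ) := by
      rintro x ⟨⟨y, _, rfl⟩, _⟩
      exact Real.exp_pos y
    rw [muE_eq hsub, Set.preimage_diff, Set.preimage_image_eq U Real.exp_injective]
    exact expE_lt_of_lt hε hUA

lemma mu_value {E : Set ℝ} (hE : E ⊆ Set.Ioi (0:ℝ)) (h : NullMeasurableSet E volume) :
    muE E = expE (∫⁻ x in E, ENNReal.ofReal x⁻¹ ∂volume) := by
  set A := Real.exp ⁻¹' E with hA
  have hAnm : NullMeasurableSet A volume := nullMeasurable_preimage_exp h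
  set C := toMeasurable volume A with hC
  have hAC : A ⊆ C := subset_toMeasurable _ _
  have hCA : volume (C \ A) = 0 := (ae_eq_set.mp hAnm.toMeasurable_ae_eq).1
  have hvol : volume A = volume C := (measure_toMeasurable A).symm
  have hEimg : E = Real.exp '' A := by
    rw [hA, Set.image_preimage_eq_inter_range, Real.range_exp, inter_eq_left.2 hE]
  have haeq : E =ᵐ[volume] Real.exp '' C := by
    rw [ae_eq_set]
    constructor
    · have : E \ Real.exp '' C = ∅ := by
        rw [diff_eq_empty]
        rw [hEimg]
        exact image_mono hAC
      simp [this]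
    · have himg : Real.exp '' C \ E = Real.exp '' (C \ A) := by
        rw [hEimg, Set.image_diff Real.exp_injective]
      rw [himg]
      exact image_exp_null hCA
  rw [muE_eq hE, ← hA, hvol, ← lintegral_inv_image_exp (measurableSet_toMeasurable volume A)]
  congr 1
  exact setLIntegral_congr haeq.symm

theorem stmt16 (E : Set ℝ) (hE : E ⊆ Set.Ioi (0:ℝ)) :
    (MuMeasurable E ↔ MeasureTheory.NullMeasurableSet E MeasureTheory.volume) ∧
    (MuMeasurable E →
      muE E = expE (∫⁻ x in E, ENNReal.ofReal x⁻¹ ∂MeasureTheory.volume)) := by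
  refine ⟨⟨fun h => mu_forward hE h, fun h => mu_backward hE h⟩, fun h => ?_⟩
  exact mu_value hE (mu_forward hE h)

end
end
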